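/- Let A be a Marot ring with total quotient ring K, S ⊆ Reg(A) a multiplicative set, and suppose A is a P-ring. Then the localization A_S is a P-ring. -/

import Mathlib

/-- A Marot ring: regular ideals are generated by their regular elements. -/
def IsMarot (A : Type*) [CommRing A] : Prop :=
  ∀ I : Ideal A, (∃ r ∈ I, r ∈ nonZeroDivisors A) →
    I = Ideal.span {r : A | r ∈ I ∧ r ∈ nonZeroDivisors A}

/-- The underlying set of the regular quotient ring. -/
def rqSet {R K : Type*} [CommRing R] [CommRing K] (f : R →+* K) (P : Ideal R) : Set K :=
  {x | ∃ a s : R, s ∈ nonZeroDivisors R ∧ s ∉ P ∧ x * f s = f a}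

/-- The regular quotient ring at a prime, as a subring of K. -/
def rqSub {R K : Type*} [CommRing R] [CommRing K] (f : R →+* K) (P : Ideal R)
    (hP : P.IsPrime) : Subring K where
  carrier := rqSet f P
  one_mem' := ⟨1, 1, Submonoid.one_mem _, fun h => hP.ne_top (P.eq_top_iff_one.mpr h), by simp⟩
  zero_mem' := ⟨0, 1, Submonoid.one_mem _, fun h => hP.ne_top (P.eq_top_iff_one.mpr h), by simp⟩
  mul_mem' := by
    rintro x y ⟨a, s, hs, hsP, hx⟩ ⟨b, t, ht, htP, hy⟩
    refine ⟨a * b, s * t, mul_mem hs ht, fun h => ((hP.mem_or_mem h).elim hsP htP), ?_⟩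
    rw [map_mul, map_mul]
    calc x * y * (f s * f t) = (x * f s) * (y * f t) := by ring
    _ = f a * f b := by rw [hx, hy]
  add_mem' := by
    rintro x y ⟨a, s, hs, hsP, hx⟩ ⟨b, t, ht, htP, hy⟩
    refine ⟨a * t + b * s, s * t, mul_mem hs ht, fun h => ((hP.mem_or_mem h).elim hsP htP), ?_⟩
    rw [map_mul, map_add, map_mul, map_mul]
    calc (x + y) * (f s * f t) = (x * f s) * f t + (y * f t) * f s := by ring
    _ = f a * f t + f b * f s := by rw [hx, hy]
  neg_mem' := by
    rintro x ⟨a, s, hs, hsP, hx⟩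
    exact ⟨-a, s, hs, hsP, by rw [map_neg, neg_mul, hx]⟩

/-- The canonical map into the regular quotient ring. -/
def toRq {R K : Type*} [CommRing R] [CommRing K] (f : R →+* K) (P : Ideal R)
    (hP : P.IsPrime) : R →+* rqSub f P hP :=
  f.codRestrict _ fun r =>
    ⟨r, 1, Submonoid.one_mem _, fun h => hP.ne_top (P.eq_top_iff_one.mpr h), by simp⟩

/-- A Manis valuation pair of K. -/
def IsManisPair {K : Type*} [CommRing K] (V : Subring K) (M : Ideal V) : Prop :=
  M.IsPrime ∧ ∀ x : K, x ∉ V → ∃ y ∈ M, ∃ z : V, (z : K) = x * (y : K) ∧ z ∉ M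

/-- The weakly Bourbaki associated primes of K/A. -/
def WBAssoc (A : Type*) [CommRing A] : Set (Ideal A) :=
  {P | ∃ a b : A, b ∈ nonZeroDivisors A ∧
    P ∈ ((Ideal.span {b}).colon (Ideal.span {a})).minimalPrimes}

/-- A regular prime P is valued if (A_(P), P·A_(P)) is a Manis valuation pair. -/
def IsValuedPrime (A : Type*) [CommRing A] (P : Ideal A) : Prop :=
  ∃ hP : P.IsPrime,
    IsManisPair (rqSub (algebraMap A (Localization (nonZeroDivisors A))) P hP)
      (P.map (toRq (algebraMap A (Localization (nonZeroDivisors A))) P hP))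

/-- A P-ring: every weakly Bourbaki associated prime of K/A is valued. -/
def PRing (A : Type*) [CommRing A] : Prop :=
  ∀ P ∈ WBAssoc A, IsValuedPrime A P

namespace St10

lemma span_singleton_eq_of_unit {R : Type*} [CommRing R] {a b u : R} (hu : IsUnit u)
    (h : a * u = b) : Ideal.span {a} = Ideal.span {b} := by
  apply le_antisymm <;> rw [Ideal.span_singleton_le_span_singleton]
  · refine ⟨↑hu.unit⁻¹, ?_⟩
    rw [← h, mul_assoc]
    simp [IsUnit.unit_spec]
  · exact ⟨u, h.symm⟩

lemma colon_map {A B : Type*} [CommRing A] [CommRing B] [Algebra A B] (S : Submonoid A)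
    [IsLocalization S B] (a b : A) :
    ((Ideal.span {b}).colon (Ideal.span {a})).map (algebraMap A B)
      = (Ideal.span {algebraMap A B b}).colon (Ideal.span {algebraMap A B a}) := by
  apply le_antisymm
  · rw [Ideal.map_le_iff_le_comap]
    intro y hy
    rw [Ideal.mem_colon_span_singleton] at hy
    obtain ⟨c, hc⟩ := Ideal.mem_span_singleton.mp hy
    rw [Ideal.mem_comap, Ideal.mem_colon_span_singleton, ← map_mul, hc]
    exact Ideal.mem_span_singleton.mpr ⟨algebraMap A B c, map_mul _ _ _⟩
  · intro x hx
    rw [Ideal.mem_colon_span_singleton] at hx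
    obtain ⟨q, hq⟩ := Ideal.mem_span_singleton.mp hx
    obtain ⟨⟨y, s⟩, hys⟩ := IsLocalization.surj S x
    obtain ⟨⟨c, t⟩, hct⟩ := IsLocalization.surj S q
    have key : algebraMap A B (a * y * t) = algebraMap A B (b * c * s) := by
      simp only [map_mul]
      rw [← hys, ← hct]
      linear_combination algebraMap A B (s : A) * algebraMap A B (t : A) * hq
    obtain ⟨u, hu⟩ := (IsLocalization.eq_iff_exists S B).mp key
    have hz : (u : A) * t * y ∈ (Ideal.span {b}).colon (Ideal.span {a}) := by
      rw [Ideal.mem_colon_span_singleton]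
      exact Ideal.mem_span_singleton.mpr ⟨(u : A) * c * s, by linear_combination hu⟩
    refine (IsLocalization.mem_map_algebraMap_iff S B).mpr ⟨⟨⟨(u : A) * t * y, hz⟩, u * t * s⟩, ?_⟩
    simp only [Submonoid.coe_mul, map_mul]
    linear_combination algebraMap A B (u : A) * algebraMap A B (t : A) * hys

lemma minimal_comap {A B : Type*} [CommRing A] [CommRing B] [Algebra A B] (S : Submonoid A)
    [IsLocalization S B] (J : Ideal A) (Q : Ideal B)
    (hQ : Q ∈ (J.map (algebraMap A B)).minimalPrimes) :
    Q.comap (algebraMap A B) ∈ J.minimalPrimes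
      ∧ Q = (Q.comap (algebraMap A B)).map (algebraMap A B)
      ∧ Disjoint (S : Set A) ((Q.comap (algebraMap A B) : Ideal A) : Set A) := by
  have hQp : Q.IsPrime := hQ.1.1
  have hQle : J.map (algebraMap A B) ≤ Q := hQ.1.2
  set P := Q.comap (algebraMap A B) with hPdef
  have hPp : P.IsPrime := Ideal.IsPrime.comap _
  have hJP : J ≤ P := le_trans Ideal.le_comap_map (Ideal.comap_mono hQle)
  have hdisj : Disjoint (S : Set A) (P : Set A) := by
    rw [Set.disjoint_left]
    intro s hsS hsP
    have : algebraMap A B s ∈ Q := hsP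
    exact hQp.ne_top (Q.eq_top_of_isUnit_mem this (IsLocalization.map_units B ⟨s, hsS⟩))
  have hmapcomap : Q = P.map (algebraMap A B) := (IsLocalization.map_comap S B Q).symm
  refine ⟨⟨⟨hPp, hJP⟩, ?_⟩, hmapcomap, hdisj⟩
  rintro P' ⟨hP'p, hJP'⟩ hP'le
  have hdisj' : Disjoint (S : Set A) (P' : Set A) :=
    Set.disjoint_of_subset_right hP'le hdisj
  have hmapP' : (P'.map (algebraMap A B)).IsPrime :=
    IsLocalization.isPrime_of_isPrime_disjoint S B P' hP'p hdisj'
  have h1 : J.map (algebraMap A B) ≤ P'.map (algebraMap A B) := Ideal.map_mono hJP'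
  have h2 : P'.map (algebraMap A B) ≤ Q := hmapcomap ▸ Ideal.map_mono hP'le
  have h3 : Q ≤ P'.map (algebraMap A B) := hQ.2 ⟨hmapP', h1⟩ h2
  have h4 : P'.map (algebraMap A B) = Q := le_antisymm h2 h3
  calc P = Q.comap (algebraMap A B) := rfl
    _ = (P'.map (algebraMap A B)).comap (algebraMap A B) := by rw [h4]
    _ = P' := IsLocalization.under_map_of_isPrime_disjoint S B hP'p hdisj'
    _ ≤ P' := le_rfl

lemma manis_transport {K K' : Type*} [CommRing K] [CommRing K'] (φ : K ≃+* K')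
    (V : Subring K) (W : Subring K') (M : Ideal V) (N : Ideal W)
    (hW : W = V.map (φ : K →+* K'))
    (ψ : V →+* W) (hψ : ∀ v : V, (ψ v : K') = φ (v : K))
    (hN : N = M.map ψ)
    (h : IsManisPair V M) : IsManisPair W N := by
  obtain ⟨hMp, hman⟩ := h
  have hψinj : Function.Injective ψ := by
    intro v v' hvv'
    have : φ (v : K) = φ (v' : K) := by rw [← hψ, ← hψ, hvv']
    exact Subtype.ext (φ.injective this)
  have hψsurj : Function.Surjective ψ := by
    rintro ⟨w, hw⟩
    rw [hW] at hw
    obtain ⟨v, hv, rfl⟩ := Subring.mem_map.mp hw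
    exact ⟨⟨v, hv⟩, Subtype.ext (hψ ⟨v, hv⟩)⟩
  let e : V ≃+* W := RingEquiv.ofBijective ψ ⟨hψinj, hψsurj⟩
  have hmape : M.map e = M.map ψ := rfl
  have hNmem : ∀ w : W, w ∈ N ↔ e.symm w ∈ M := by
    intro w
    rw [hN, ← hmape]
    exact Ideal.symm_apply_mem_of_equiv_iff.symm
  constructor
  · rw [hN, ← hmape]
    exact Ideal.map_isPrime_of_equiv e (I := M)
  · intro x hx
    have hx' : φ.symm x ∉ V := by
      intro hmem
      apply hx
      rw [hW]
      exact Subring.mem_map.mpr ⟨φ.symm x, hmem, φ.apply_symm_apply x⟩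
    obtain ⟨y, hyM, z, hz, hzM⟩ := hman (φ.symm x) hx'
    refine ⟨ψ y, hN ▸ Ideal.mem_map_of_mem ψ hyM, ψ z, ?_, ?_⟩
    · rw [hψ, hψ, hz, map_mul, φ.apply_symm_apply]
    · intro hmem
      have hmem' : e.symm (ψ z) ∈ M := (hNmem (ψ z)).mp hmem
      have hez : e.symm (ψ z) = z := by
        have h' : ψ z = e z := rfl
        rw [h', e.symm_apply_apply]
      rw [hez] at hmem'
      exact hzM hmem'

variable {A : Type*} [CommRing A] {S : Submonoid A} (hS : (S : Set A) ⊆ nonZeroDivisors A)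

include hS

lemma map_reg {a : A} (ha : a ∈ nonZeroDivisors A) :
    algebraMap A (Localization S) a ∈ nonZeroDivisors (Localization S) := by
  rw [mem_nonZeroDivisors_iff_right] at ha ⊢
  intro x hx
  obtain ⟨⟨y, s⟩, hys⟩ := IsLocalization.surj S x
  have h1 : algebraMap A (Localization S) (y * a) = 0 := by
    rw [map_mul, ← hys]
    calc x * algebraMap A (Localization S) (s : A) * algebraMap A (Localization S) a
        = x * algebraMap A (Localization S) a * algebraMap A (Localization S) (s : A) := by ring
    _ = 0 := by rw [hx, zero_mul]
  have h2 : y * a = 0 := IsLocalization.injective (Localization S) hS (by simpa using h1)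
  have h3 : y = 0 := ha y h2
  have h4 := hys
  rw [h3, map_zero] at h4
  exact ((IsLocalization.map_units (Localization S) s).mul_left_eq_zero).mp h4

lemma reg_of_map {a : A}
    (ha : algebraMap A (Localization S) a ∈ nonZeroDivisors (Localization S)) :
    a ∈ nonZeroDivisors A := by
  rw [mem_nonZeroDivisors_iff_right] at ha ⊢
  intro y hy
  have : algebraMap A (Localization S) y * algebraMap A (Localization S) a = 0 := by
    rw [← map_mul, hy, map_zero]
  exact IsLocalization.injective (Localization S) hS (by simpa using ha _ this)

lemma num_reg {s' : Localization S} (hs' : s' ∈ nonZeroDivisors (Localization S))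
    {c : A} {w : S} (h : s' * algebraMap A (Localization S) (w : A) = algebraMap A (Localization S) c) :
    c ∈ nonZeroDivisors A := by
  refine reg_of_map hS ?_
  rw [← h]
  exact mul_mem hs' (map_reg hS (hS w.2))

end St10

set_option maxHeartbeats 2000000 in
theorem statement10 (A : Type*) [CommRing A] (hM : IsMarot A) (hA : PRing A)
    (S : Submonoid A) (hS : (S : Set A) ⊆ nonZeroDivisors A) :
    PRing (Localization S) := by
  intro Q hQ
  obtain ⟨a', b', hb'reg, hmin⟩ := hQ
  obtain ⟨⟨a, u⟩, hau⟩ := IsLocalization.surj S a'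
  obtain ⟨⟨b, v⟩, hbv⟩ := IsLocalization.surj S b'
  have hbreg : b ∈ nonZeroDivisors A := St10.num_reg hS hb'reg hbv
  have hspa : Ideal.span {a'} = Ideal.span {algebraMap A (Localization S) a} :=
    St10.span_singleton_eq_of_unit (IsLocalization.map_units _ u) hau
  have hspb : Ideal.span {b'} = Ideal.span {algebraMap A (Localization S) b} :=
    St10.span_singleton_eq_of_unit (IsLocalization.map_units _ v) hbv
  rw [hspa, hspb, ← St10.colon_map S a b] at hmin
  obtain ⟨hPmin, hQP, hdisj⟩ := St10.minimal_comap S _ Q hmin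
  set P := Q.comap (algebraMap A (Localization S)) with hPdef
  have hPW : P ∈ WBAssoc A := ⟨a, b, hbreg, hPmin⟩
  obtain ⟨hPprime, hmanis⟩ := hA P hPW
  have hQprime : Q.IsPrime := hmin.1.1
  refine ⟨hQprime, ?_⟩
  letI : Algebra A (Localization (nonZeroDivisors (Localization S))) :=
    ((algebraMap (Localization S) (Localization (nonZeroDivisors (Localization S)))).comp
      (algebraMap A (Localization S))).toAlgebra
  haveI hloc : IsLocalization (nonZeroDivisors A)
      (Localization (nonZeroDivisors (Localization S))) := by
    constructor; constructor
    · rintro ⟨t, ht⟩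
      exact IsLocalization.map_units (Localization (nonZeroDivisors (Localization S)))
        (⟨algebraMap A (Localization S) t, St10.map_reg hS ht⟩ :
          nonZeroDivisors (Localization S))
    · intro z
      obtain ⟨⟨b'', s'⟩, hz⟩ := IsLocalization.surj (nonZeroDivisors (Localization S)) z
      obtain ⟨⟨c, w⟩, hcw⟩ := IsLocalization.surj S (s' : Localization S)
      obtain ⟨⟨d, e⟩, hde⟩ := IsLocalization.surj S b''
      have hcreg := St10.num_reg hS s'.2 hcw
      refine ⟨(d * w, ⟨c * e, mul_mem hcreg (hS e.2)⟩), ?_⟩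
      show z * (algebraMap (Localization S) (Localization (nonZeroDivisors (Localization S))))
          (algebraMap A (Localization S) (c * (e : A)))
        = (algebraMap (Localization S) (Localization (nonZeroDivisors (Localization S))))
          (algebraMap A (Localization S) (d * (w : A)))
      simp only [map_mul]
      rw [← hcw, ← hde]
      simp only [map_mul]
      linear_combination (algebraMap (Localization S) (Localization (nonZeroDivisors (Localization S))))
        (algebraMap A (Localization S) (w : A)) *
        (algebraMap (Localization S) (Localization (nonZeroDivisors (Localization S))))
        (algebraMap A (Localization S) (e : A)) * hz
    · intro x y hxy
      have hxy' : algebraMap (Localization S) (Localization (nonZeroDivisors (Localization S)))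
            (algebraMap A (Localization S) x)
          = algebraMap (Localization S) (Localization (nonZeroDivisors (Localization S)))
            (algebraMap A (Localization S) y) := hxy
      obtain ⟨c', hc'⟩ :=
        IsLocalization.exists_of_eq (M := nonZeroDivisors (Localization S)) hxy'
      obtain ⟨⟨d, w⟩, hdw⟩ := IsLocalization.surj S (c' : Localization S)
      have hdreg := St10.num_reg hS c'.2 hdw
      have key : algebraMap A (Localization S) (d * x) = algebraMap A (Localization S) (d * y) := by
        simp only [map_mul]
        rw [← hdw]
        linear_combination algebraMap A (Localization S) (w : A) * hc'
      obtain ⟨u', hu'⟩ := (IsLocalization.eq_iff_exists S (Localization S)).mp key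
      refine ⟨⟨(u' : A) * d, mul_mem (hS u'.2) hdreg⟩, ?_⟩
      show (u' : A) * d * x = (u' : A) * d * y
      rw [mul_assoc, mul_assoc]
      exact hu'
  set φ := (IsLocalization.algEquiv (nonZeroDivisors A) (Localization (nonZeroDivisors A))
    (Localization (nonZeroDivisors (Localization S)))).toRingEquiv with hφdef
  have hφ : ∀ t : A, φ (algebraMap A (Localization (nonZeroDivisors A)) t)
      = algebraMap (Localization S) (Localization (nonZeroDivisors (Localization S)))
        (algebraMap A (Localization S) t) := fun t =>
    (IsLocalization.algEquiv (nonZeroDivisors A) (Localization (nonZeroDivisors A))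
      (Localization (nonZeroDivisors (Localization S)))).commutes t
  have hW : rqSub (algebraMap (Localization S) (Localization (nonZeroDivisors (Localization S)))) Q hQprime
      = (rqSub (algebraMap A (Localization (nonZeroDivisors A))) P hPprime).map
          (φ : Localization (nonZeroDivisors A) →+* Localization (nonZeroDivisors (Localization S))) := by
    ext x
    constructor
    · rintro ⟨a'', s', hs'reg, hs'Q, hx⟩
      obtain ⟨⟨c, w⟩, hcw⟩ := IsLocalization.surj S s'
      obtain ⟨⟨d, e⟩, hde⟩ := IsLocalization.surj S a''
      have hcreg : c ∈ nonZeroDivisors A := St10.num_reg hS hs'reg hcw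
      have hwP : (w : A) ∉ P := fun h => Set.disjoint_left.mp hdisj w.2 h
      have heP : (e : A) ∉ P := fun h => Set.disjoint_left.mp hdisj e.2 h
      have hcP : c ∉ P := by
        intro hc
        have h1 : algebraMap A (Localization S) c ∈ Q := hc
        rw [← hcw] at h1
        rcases hQprime.mem_or_mem h1 with h2 | h2
        · exact hs'Q h2
        · exact hwP h2
      refine Subring.mem_map.mpr ⟨φ.symm x,
        ⟨d * w, c * e, mul_mem hcreg (hS e.2),
          fun hce => (hPprime.mem_or_mem hce).elim hcP heP, ?_⟩, φ.apply_symm_apply x⟩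
      apply φ.injective
      rw [map_mul, φ.apply_symm_apply, hφ (c * (e : A)), hφ (d * (w : A))]
      simp only [map_mul]
      rw [← hcw, ← hde]
      simp only [map_mul]
      linear_combination (algebraMap (Localization S) (Localization (nonZeroDivisors (Localization S))))
        (algebraMap A (Localization S) (w : A)) *
        (algebraMap (Localization S) (Localization (nonZeroDivisors (Localization S))))
        (algebraMap A (Localization S) (e : A)) * hx
    · rintro ⟨y, ⟨aa, ss, hssreg, hssP, hy⟩, rfl⟩
      refine ⟨algebraMap A (Localization S) aa, algebraMap A (Localization S) ss,
        St10.map_reg hS hssreg, fun h => hssP h, ?_⟩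
      rw [← hφ ss, ← hφ aa]
      exact (map_mul φ y _).symm.trans (congrArg φ hy)
  set ψ : rqSub (algebraMap A (Localization (nonZeroDivisors A))) P hPprime →+*
      rqSub (algebraMap (Localization S) (Localization (nonZeroDivisors (Localization S)))) Q hQprime :=
    ((φ : Localization (nonZeroDivisors A) →+* Localization (nonZeroDivisors (Localization S))).comp
      (rqSub (algebraMap A (Localization (nonZeroDivisors A))) P hPprime).subtype).codRestrict _
      (fun v => by rw [hW]; exact Subring.mem_map.mpr ⟨v, v.2, rfl⟩) with hψdef
  have hψ : ∀ v : rqSub (algebraMap A (Localization (nonZeroDivisors A))) P hPprime,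
      ((ψ v : rqSub (algebraMap (Localization S) (Localization (nonZeroDivisors (Localization S)))) Q hQprime) :
        Localization (nonZeroDivisors (Localization S))) = φ (v : Localization (nonZeroDivisors A)) :=
    fun v => rfl
  have hN : Q.map (toRq (algebraMap (Localization S) (Localization (nonZeroDivisors (Localization S)))) Q hQprime)
      = (P.map (toRq (algebraMap A (Localization (nonZeroDivisors A))) P hPprime)).map ψ := by
    have hstep : Ideal.map (toRq (algebraMap (Localization S)
          (Localization (nonZeroDivisors (Localization S)))) Q hQprime) Q
        = Ideal.map (toRq (algebraMap (Localization S)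
          (Localization (nonZeroDivisors (Localization S)))) Q hQprime)
          (P.map (algebraMap A (Localization S))) := congrArg _ hQP
    rw [hstep, Ideal.map_map, Ideal.map_map]
    congr 1
    apply RingHom.ext
    intro t
    apply Subtype.ext
    show algebraMap (Localization S) (Localization (nonZeroDivisors (Localization S)))
        (algebraMap A (Localization S) t) = φ (algebraMap A (Localization (nonZeroDivisors A)) t)
    exact (hφ t).symm
  exact St10.manis_transport φ _ _ _ _ hW ψ hψ hN hmanis
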